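/- Let A be a symmetric m×m real matrix that is negative definite, with nonnegative off-diagonal entries (A_{ij} ≥ 0 for i ≠ j), whose associated graph (edges where A_{ij} > 0) is a tree. For a fixed index m, order the vertices by graph distance to m. Define h recursively from the leaves farthest from m: h(i) = A_{ii} for vertices with no predecessor, and h(i) = A_{ii} − Σ_{j ≺ i} A_{ij}²/h(j) otherwise (where j ≺ i means j is an immediate predecessor of i). If all off-diagonal entries of A are 0 or 1, then h(i) < 0 for all i. -/
import Mathlib


open Matrix

/-- A real symmetric matrix is negative definite if the associated quadratic form
is negative on nonzero vectors. -/
def IsNegDef {m : ℕ} (A : Matrix (Fin m) (Fin m) ℝ) : Prop :=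
  A.IsSymm ∧ ∀ x : Fin m → ℝ, x ≠ 0 → x ⬝ᵥ A.mulVec x < 0

/-- The immediate predecessors of `v` for the order by graph distance to the
fixed vertex `r`: neighbours of `v` lying farther from `r`. -/
noncomputable def Preds {m : ℕ} (G : SimpleGraph (Fin m)) [DecidableRel G.Adj] (r v : Fin m) :
    Finset (Fin m) :=
  Finset.univ.filter fun u => G.Adj u v ∧ G.dist r u = G.dist r v + 1

section AuxGraph
variable {V : Type*} [DecidableEq V] {G : SimpleGraph V}

lemma tree_path_length_eq_dist (hG : G.IsTree) {a b : V} (p : G.Walk a b) (hp : p.IsPath) :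
    p.length = G.dist a b := by
  obtain ⟨w, hw⟩ := hG.isConnected.exists_walk_length_eq_dist a b
  have hb : w.bypass.IsPath := w.bypass_isPath
  have h1 : w.bypass.length ≤ G.dist a b := hw ▸ w.length_bypass_le
  have h2 : G.dist a b ≤ w.bypass.length := G.dist_le _
  have h3 : p = w.bypass := (hG.existsUnique_path a b).unique hp hb
  rw [h3]; omega

lemma exists_path_length_dist (hc : G.Connected) (a b : V) :
    ∃ p : G.Walk a b, p.IsPath ∧ p.length = G.dist a b := by
  obtain ⟨w, hw⟩ := hc.exists_walk_length_eq_dist a b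
  exact ⟨w.bypass, w.bypass_isPath,
    le_antisymm (hw ▸ w.length_bypass_le) (G.dist_le _)⟩

lemma concat_isPath' {a b c : V} {p : G.Walk a b} (hp : p.IsPath) (h : G.Adj b c)
    (hc : c ∉ p.support) : (p.concat h).IsPath := by
  have h1 : (SimpleGraph.Walk.cons h.symm p.reverse).IsPath := by
    refine hp.reverse.cons ?_
    rwa [SimpleGraph.Walk.support_reverse, List.mem_reverse]
  have h2 := h1.reverse
  rw [SimpleGraph.Walk.reverse_cons, SimpleGraph.Walk.reverse_reverse] at h2
  exact h2

lemma adj_dist_dichotomy (hG : G.IsTree) (r : V) {u v : V} (huv : G.Adj u v) :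
    G.dist r u = G.dist r v + 1 ∨ G.dist r v = G.dist r u + 1 := by
  have key : ∀ {x y : V}, G.Adj x y → G.dist r x ≤ G.dist r y →
      G.dist r y = G.dist r x + 1 := by
    intro x y hxy hle
    obtain ⟨p, hp, hlen⟩ := exists_path_length_dist hG.isConnected r x
    by_cases hmem : y ∈ p.support
    · exfalso
      have ht := tree_path_length_eq_dist hG _ (hp.takeUntil hmem)
      have hle2 := p.length_takeUntil_le hmem
      have hspec := p.take_spec hmem
      have hladd : (p.takeUntil y hmem).length + (p.dropUntil y hmem).length = p.length := by
        conv_rhs => rw [← hspec]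
        rw [SimpleGraph.Walk.length_append]
      have h0 : (p.dropUntil y hmem).length = 0 := by omega
      exact hxy.ne' (SimpleGraph.Walk.eq_of_length_eq_zero h0)
    · have hq : (p.concat hxy).IsPath := concat_isPath' hp hxy hmem
      have := tree_path_length_eq_dist hG _ hq
      rw [SimpleGraph.Walk.length_concat] at this
      omega
  rcases le_total (G.dist r u) (G.dist r v) with hle | hle
  · right; exact key huv hle
  · left; exact key huv.symm hle

lemma parent_spec (hG : G.IsTree) (r : V) {u : V} (hu : u ≠ r) :
    ∃ v, G.Adj v u ∧ G.dist r v + 1 = G.dist r u ∧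
      ∀ w, G.Adj w u → G.dist r w + 1 = G.dist r u → w = v := by
  obtain ⟨p, hp, hlen⟩ := exists_path_length_dist hG.isConnected r u
  have hd0 : G.dist r u ≠ 0 := by
    intro h0
    exact hu (hG.isConnected.dist_eq_zero_iff.mp h0).symm
  obtain ⟨n, hn⟩ : ∃ n, G.dist r u = n + 1 := ⟨G.dist r u - 1, by omega⟩
  set v := p.getVert n with hv
  have hadj : G.Adj v u := by
    have h1 := p.adj_getVert_succ (i := n) (by omega)
    have h2 : p.getVert (n + 1) = u := by
      rw [← hn, ← hlen]; exact p.getVert_length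
    rwa [h2] at h1
  have hmem : v ∈ p.support := SimpleGraph.Walk.mem_support_iff_exists_getVert.mpr
    ⟨n, rfl, by omega⟩
  have hdv : G.dist r v = n := by
    have h1 := tree_path_length_eq_dist hG _ (hp.takeUntil hmem)
    have h2 := p.length_takeUntil_le hmem
    rcases adj_dist_dichotomy hG r hadj with h | h
    · omega
    · omega
  refine ⟨v, hadj, by omega, ?_⟩
  intro w hw hdw
  obtain ⟨q, hq, hqlen⟩ := exists_path_length_dist hG.isConnected r w
  have hdww : G.dist r w = n := by omega
  have humem : u ∉ q.support := by
    intro hmem'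
    have h1 := tree_path_length_eq_dist hG _ (hq.takeUntil hmem')
    have h2 := q.length_takeUntil_le hmem'
    omega
  have hconc : (q.concat hw).IsPath := concat_isPath' hq hw humem
  have hpe : q.concat hw = p := (hG.existsUnique_path r u).unique hconc hp
  have hg : (q.concat hw).getVert n = w := by
    rw [SimpleGraph.Walk.concat_eq_append, SimpleGraph.Walk.getVert_append]
    simp [hqlen, hdww]
  rw [hpe] at hg
  exact hg.symm

lemma dist_lt_card [Fintype V] (hG : G.IsTree) (r u : V) :
    G.dist r u < Fintype.card V := by
  obtain ⟨p, hp, hlen⟩ := exists_path_length_dist hG.isConnected r u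
  have := hp.length_lt
  omega

end AuxGraph

/-- The elimination vector, defined level by level. -/
noncomputable def xAux {m : ℕ} (A : Matrix (Fin m) (Fin m) ℝ) (h : Fin m → ℝ)
    (d : Fin m → ℕ) (par : Fin m → Fin m) (i : Fin m) : ℕ → Fin m → ℝ
  | 0 => fun u => if u = i then 1 else 0
  | k + 1 => fun u =>
      if d u ≤ d i then (if u = i then 1 else 0)
      else -(A (par u) u * xAux A h d par i k (par u)) / h u

lemma xAux_le {m : ℕ} (A : Matrix (Fin m) (Fin m) ℝ) (h : Fin m → ℝ) (d : Fin m → ℕ)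
    (par : Fin m → Fin m) (i u : Fin m) {k : ℕ} (hk : k = d u) (hle : d u ≤ d i) :
    xAux A h d par i k u = if u = i then 1 else 0 := by
  subst hk
  cases hD : d u with
  | zero => simp [xAux]
  | succ n => simp only [hD, xAux]; rw [if_pos (by omega)]

lemma xAux_gt {m : ℕ} (A : Matrix (Fin m) (Fin m) ℝ) (h : Fin m → ℝ) (d : Fin m → ℕ)
    (par : Fin m → Fin m) (i u : Fin m) {k : ℕ} (hk : k = d u) (hgt : d i < d u)
    (hpd : d (par u) + 1 = d u) :
    xAux A h d par i k u = -(A (par u) u * xAux A h d par i (d (par u)) (par u)) / h u := by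
  subst hk
  cases hD : d u with
  | zero => omega
  | succ n =>
    rw [hD] at hpd
    simp only [hD, xAux]
    rw [if_neg (by omega)]
    have hn : d (par u) = n := by omega
    rw [hn]

/-- Matrix-theoretic version of Proposition 7: for a symmetric negative definite
real matrix `A` with off-diagonal entries `0` or `1` whose associated graph
(edges where `A i j > 0`) is a tree, the tree-structured elimination pivots
`h i = A i i − Σ_{j ≺ i} (A i j)² / h j` (with `h i = A i i` at the vertices
with no predecessor, the predecessors being the neighbours farther from the
fixed root `r`) are all negative. -/
theorem stmt_14 (m : ℕ) (hm : 0 < m)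
    (A : Matrix (Fin m) (Fin m) ℝ) (hsymm : A.IsSymm) (hneg : IsNegDef A)
    (hoffnn : ∀ i j, i ≠ j → 0 ≤ A i j)
    (hoff01 : ∀ i j, i ≠ j → A i j = 0 ∨ A i j = 1)
    (G : SimpleGraph (Fin m)) [DecidableRel G.Adj]
    (hAdj : ∀ i j, G.Adj i j ↔ i ≠ j ∧ 0 < A i j)
    (hG : G.IsTree) (r : Fin m)
    (h : Fin m → ℝ)
    (hrec : ∀ i, h i = A i i - ∑ j ∈ Preds G r i, A i j ^ 2 / h j) :
    ∀ i, h i < 0 := by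
  classical
  obtain ⟨-, hq⟩ := hneg
  -- basic facts about A
  have hsymA : ∀ u v, A u v = A v u := fun u v => (hsymm.apply v u)
  have hA0 : ∀ u v, u ≠ v → ¬ G.Adj u v → A u v = 0 := by
    intro u v huv hn
    rcases hoff01 u v huv with h0 | h1
    · exact h0
    · exact absurd ((hAdj u v).mpr ⟨huv, by rw [h1]; norm_num⟩) hn
  -- distances
  have hdr : G.dist r r = 0 := SimpleGraph.dist_self
  have hdne : ∀ u : Fin m, u ≠ r → G.dist r u ≠ 0 := by
    intro u hu h0
    exact hu (hG.isConnected.dist_eq_zero_iff.mp h0).symm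
  -- parent function
  have hpar_ex : ∀ u : Fin m, ∃ v : Fin m, u ≠ r →
      (G.Adj v u ∧ G.dist r v + 1 = G.dist r u ∧
        ∀ w, G.Adj w u → G.dist r w + 1 = G.dist r u → w = v) := by
    intro u
    by_cases hu : u = r
    · exact ⟨r, fun h' => absurd hu h'⟩
    · obtain ⟨v, hv⟩ := parent_spec hG r hu
      exact ⟨v, fun _ => hv⟩
  choose par hpar using hpar_ex
  have hpadj : ∀ u, u ≠ r → G.Adj (par u) u := fun u hu => (hpar u hu).1
  have hpd : ∀ u, u ≠ r → G.dist r (par u) + 1 = G.dist r u := fun u hu => (hpar u hu).2.1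
  have hpuniq : ∀ u w, G.Adj w u → G.dist r w + 1 = G.dist r u → w = par u := by
    intro u w hw hdw
    have hu : u ≠ r := by
      intro he; rw [he, hdr] at hdw; omega
    exact (hpar u hu).2.2 w hw hdw
  -- Preds facts
  have hPmem : ∀ u j : Fin m, j ∈ Preds G r u ↔ G.Adj j u ∧ G.dist r j = G.dist r u + 1 := by
    intro u j; simp [Preds]
  have hPpar : ∀ u j : Fin m, j ∈ Preds G r u → j ≠ r ∧ par j = u := by
    intro u j hj
    rw [hPmem] at hj
    have hjr : j ≠ r := by
      intro he; rw [he, hdr] at hj; omega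
    exact ⟨hjr, (hpuniq j u hj.1.symm (by omega)).symm⟩
  have hParP : ∀ j : Fin m, j ≠ r → j ∈ Preds G r (par j) := by
    intro j hj
    rw [hPmem]
    exact ⟨(hpadj j hj).symm, by have := hpd j hj; omega⟩
  -- reindexing sums over predecessors
  have hdisj : Set.PairwiseDisjoint (↑(Finset.univ : Finset (Fin m))) (Preds G r) := by
    intro a _ b _ hab
    simp only [Function.onFun]
    rw [Finset.disjoint_left]
    intro j hja hjb
    exact hab (((hPpar a j hja).2).symm.trans ((hPpar b j hjb).2))
  have hbiU : Finset.univ.biUnion (Preds G r) = Finset.univ.erase r := by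
    ext j
    rw [Finset.mem_biUnion, Finset.mem_erase]
    constructor
    · rintro ⟨u, -, hj⟩
      exact ⟨(hPpar u j hj).1, Finset.mem_univ j⟩
    · rintro ⟨hj, -⟩
      exact ⟨par j, Finset.mem_univ _, hParP j hj⟩
  have hreindex : ∀ f : Fin m → Fin m → ℝ,
      (∑ u, ∑ j ∈ Preds G r u, f u j) = ∑ j ∈ Finset.univ.erase r, f (par j) j := by
    intro f
    rw [← hbiU, Finset.sum_biUnion hdisj]
    apply Finset.sum_congr rfl
    intro u _
    apply Finset.sum_congr rfl
    intro j hj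
    rw [(hPpar u j hj).2]
  -- the main downward induction
  suffices Key : ∀ k (i : Fin m), m ≤ G.dist r i + k → h i < 0 by
    intro i; exact Key m i (Nat.le_add_left m _)
  intro k
  induction k with
  | zero =>
    intro i hi
    have := dist_lt_card hG r i
    rw [Fintype.card_fin] at this
    omega
  | succ k IH =>
    intro i hi
    have IH' : ∀ u : Fin m, G.dist r i < G.dist r u → h u < 0 := fun u hu => IH u (by omega)
    set x : Fin m → ℝ :=
      fun u => xAux A h (fun w => G.dist r w) par i (G.dist r u) u with hxdef
    have hxu_le : ∀ u, G.dist r u ≤ G.dist r i → x u = if u = i then 1 else 0 := by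
      intro u hle
      exact xAux_le A h (fun w => G.dist r w) par i u rfl hle
    have hxi : x i = 1 := by rw [hxu_le i le_rfl, if_pos rfl]
    have hx0 : ∀ u, u ≠ i → G.dist r u ≤ G.dist r i → x u = 0 := by
      intro u hui hle
      rw [hxu_le u hle, if_neg hui]
    have hxgt : ∀ u, G.dist r i < G.dist r u → x u = -(A (par u) u * x (par u)) / h u := by
      intro u hgt
      have hur : u ≠ r := by
        intro he; rw [he, hdr] at hgt; omega
      exact xAux_gt A h (fun w => G.dist r w) par i u rfl hgt (hpd u hur)
    have hxne : x ≠ 0 := by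
      intro hc
      have := congrFun hc i
      rw [hxi] at this
      norm_num at this
    -- row sums
    have hrow : ∀ u, (∑ v, A u v * x v) =
        A u u * x u + (if u = r then 0 else A u (par u) * x (par u))
          + ∑ j ∈ Preds G r u, A u j * x j := by
      intro u
      by_cases hur : u = r
      · rw [if_pos hur]
        have hdu : G.dist r u = 0 := by rw [hur]; exact hdr
        have hnm : u ∉ Preds G r u := by
          intro hmem
          rw [hPmem] at hmem
          omega
        have hvan : ∀ v ∈ Finset.univ, v ∉ insert u (Preds G r u) → A u v * x v = 0 := by
          intro v _ hv
          rw [Finset.mem_insert] at hv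
          push_neg at hv
          have hA : A u v = 0 := by
            apply hA0 u v (fun he => hv.1 he.symm)
            intro hadj
            rcases adj_dist_dichotomy hG r hadj with hc | hc
            · omega
            · exact hv.2 (by rw [hPmem]; exact ⟨hadj.symm, by omega⟩)
          rw [hA, zero_mul]
        rw [← Finset.sum_subset (Finset.subset_univ (insert u (Preds G r u))) hvan,
          Finset.sum_insert hnm]
        ring
      · rw [if_neg hur]
        have hpdu := hpd u hur
        have hnm1 : u ∉ insert (par u) (Preds G r u) := by
          rw [Finset.mem_insert]
          push_neg
          constructor
          · intro he
            rw [← he] at hpdu; omega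
          · intro hmem; rw [hPmem] at hmem; omega
        have hnm2 : par u ∉ Preds G r u := by
          intro hmem; rw [hPmem] at hmem; omega
        have hvan : ∀ v ∈ Finset.univ, v ∉ insert u (insert (par u) (Preds G r u)) →
            A u v * x v = 0 := by
          intro v _ hv
          simp only [Finset.mem_insert] at hv
          push_neg at hv
          have hA : A u v = 0 := by
            apply hA0 u v (fun he => hv.1 he.symm)
            intro hadj
            rcases adj_dist_dichotomy hG r hadj with hc | hc
            · exact hv.2.1 ((hpuniq u v hadj.symm (by omega)).symm).symm
            · exact hv.2.2 (by rw [hPmem]; exact ⟨hadj.symm, by omega⟩)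
          rw [hA, zero_mul]
        rw [← Finset.sum_subset (Finset.subset_univ _) hvan,
          Finset.sum_insert hnm1, Finset.sum_insert hnm2]
        ring
    -- the quadratic form splits into three pieces
    have hQ1 : x ⬝ᵥ A.mulVec x
        = ∑ u, (x u * (A u u * x u))
          + (∑ u, (x u * (if u = r then 0 else A u (par u) * x (par u)))
          + ∑ u, (x u * ∑ j ∈ Preds G r u, A u j * x j)) := by
      rw [← Finset.sum_add_distrib, ← Finset.sum_add_distrib]
      simp only [dotProduct, Matrix.mulVec]
      apply Finset.sum_congr rfl
      intro u _
      rw [hrow u]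
      ring
    have hQ2 : ∑ u, (x u * (if u = r then 0 else A u (par u) * x (par u)))
        = ∑ u ∈ Finset.univ.erase r, x u * (A u (par u) * x (par u)) := by
      rw [← Finset.sum_erase_add _ _ (Finset.mem_univ r), if_pos rfl, mul_zero, add_zero]
      apply Finset.sum_congr rfl
      intro u hu
      rw [if_neg (Finset.ne_of_mem_erase hu)]
    have hQ3 : ∑ u, (x u * ∑ j ∈ Preds G r u, A u j * x j)
        = ∑ j ∈ Finset.univ.erase r, x (par j) * (A (par j) j * x j) := by
      rw [← hreindex (fun u j => x u * (A u j * x j))]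
      apply Finset.sum_congr rfl
      intro u _
      rw [Finset.mul_sum]
    have hQ4 : ∑ u, (x u * (A u u * x u))
        = ∑ u, h u * x u ^ 2
          + ∑ j ∈ Finset.univ.erase r, (A (par j) j) ^ 2 / h j * x (par j) ^ 2 := by
      have hAuu : ∀ u, A u u = h u + ∑ j ∈ Preds G r u, A u j ^ 2 / h j := by
        intro u
        have := hrec u
        linarith
      calc ∑ u, x u * (A u u * x u)
          = ∑ u, (h u * x u ^ 2 + ∑ j ∈ Preds G r u, (A u j ^ 2 / h j) * x u ^ 2) := by
            apply Finset.sum_congr rfl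
            intro u _
            rw [hAuu u]
            have he : x u * ((h u + ∑ j ∈ Preds G r u, A u j ^ 2 / h j) * x u)
                = h u * x u ^ 2 + (∑ j ∈ Preds G r u, A u j ^ 2 / h j) * x u ^ 2 := by ring
            rw [he, Finset.sum_mul]
        _ = ∑ u, h u * x u ^ 2 + ∑ u, ∑ j ∈ Preds G r u, (A u j ^ 2 / h j) * x u ^ 2 :=
            Finset.sum_add_distrib
        _ = _ := by rw [hreindex (fun u j => (A u j ^ 2 / h j) * x u ^ 2)]
    -- per-vertex cancellation
    have hcj : ∀ j ∈ Finset.univ.erase r,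
        (A (par j) j) ^ 2 / h j * x (par j) ^ 2 + x j * (A j (par j) * x (par j))
          + x (par j) * (A (par j) j * x j)
        = if j = i then 0 else -(h j * x j ^ 2) := by
      intro j hj
      have hjr : j ≠ r := Finset.ne_of_mem_erase hj
      have hpdj := hpd j hjr
      rw [hsymA j (par j)]
      by_cases hji : j = i
      · subst hji
        rw [if_pos rfl]
        have hxp : x (par j) = 0 := by
          apply hx0
          · intro he
            rw [he] at hpdj; omega
          · omega
        rw [hxp]
        ring
      · rw [if_neg hji]
        by_cases hgt : G.dist r i < G.dist r j
        · have hhj : h j < 0 := IH' j hgt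
          have hxj := hxgt j hgt
          rw [hxj]
          have hne := hhj.ne
          field_simp
          ring
        · have hxj : x j = 0 := hx0 j hji (by omega)
          have hxp : x (par j) = 0 := by
            apply hx0
            · intro he
              rw [he] at hpdj; omega
            · omega
          rw [hxj, hxp]
          ring
    -- assemble
    have hQ : x ⬝ᵥ A.mulVec x = h i := by
      rw [hQ1, hQ2, hQ3, hQ4]
      have hcomb : ∑ u ∈ Finset.univ.erase r, x u * (A u (par u) * x (par u))
            + ∑ j ∈ Finset.univ.erase r, x (par j) * (A (par j) j * x j)
          = ∑ j ∈ Finset.univ.erase r,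
              (x j * (A j (par j) * x (par j)) + x (par j) * (A (par j) j * x j)) := by
        rw [← Finset.sum_add_distrib]
      rw [hcomb]
      have hcomb2 : ∑ j ∈ Finset.univ.erase r, (A (par j) j) ^ 2 / h j * x (par j) ^ 2
            + ∑ j ∈ Finset.univ.erase r,
              (x j * (A j (par j) * x (par j)) + x (par j) * (A (par j) j * x j))
          = ∑ j ∈ Finset.univ.erase r, (if j = i then 0 else -(h j * x j ^ 2)) := by
        rw [← Finset.sum_add_distrib]
        apply Finset.sum_congr rfl
        intro j hj
        have := hcj j hj
        linarith
      rw [add_assoc, hcomb2, ← Finset.sum_erase_add _ (fun u => h u * x u ^ 2)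
        (Finset.mem_univ r)]
      by_cases hir : i = r
      · subst hir
        have hcongr : ∀ j ∈ Finset.univ.erase i, (if j = i then 0 else -(h j * x j ^ 2))
            = -(h j * x j ^ 2) := by
          intro j hj
          rw [if_neg (Finset.ne_of_mem_erase hj)]
        rw [Finset.sum_congr rfl hcongr, hxi, Finset.sum_neg_distrib]
        ring
      · have hiE : i ∈ Finset.univ.erase r := Finset.mem_erase.mpr ⟨hir, Finset.mem_univ i⟩
        have hcongr : ∀ j ∈ (Finset.univ.erase r).erase i,
            (if j = i then 0 else -(h j * x j ^ 2)) = -(h j * x j ^ 2) := by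
          intro j hj
          rw [if_neg (Finset.ne_of_mem_erase hj)]
        have hifsum : ∑ j ∈ Finset.univ.erase r, (if j = i then 0 else -(h j * x j ^ 2))
            = -∑ j ∈ (Finset.univ.erase r).erase i, h j * x j ^ 2 := by
          have hfi : (if i = i then (0:ℝ) else -(h i * x i ^ 2)) = 0 := if_pos rfl
          rw [← Finset.sum_erase (Finset.univ.erase r)
              (f := fun j => if j = i then (0:ℝ) else -(h j * x j ^ 2)) (a := i) hfi,
            Finset.sum_congr rfl hcongr, Finset.sum_neg_distrib]
        have hsplit : ∑ j ∈ Finset.univ.erase r, h j * x j ^ 2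
            = ∑ j ∈ (Finset.univ.erase r).erase i, h j * x j ^ 2 + h i * x i ^ 2 :=
          (Finset.sum_erase_add _ _ hiE).symm
        rw [hifsum, hsplit, hxi]
        have hxr : x r = 0 := by
          apply hx0 r (fun he => hir he.symm)
          rw [hdr]
          exact Nat.zero_le _
        rw [hxr]
        ring
    have := hq x hxne
    linarith
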